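/- Let H be an r-m-uniform hb-graph on Fin n (every hb-edge has m-cardinality r ≥ 1) with hb-edges e_1, …, e_p, and let A_H be its k̄-adjacency hypermatrix. Then the sum of all entries of A_H equals r times the number of hb-edges: Σ_{t : Fin r → Fin n} A_H(t) = r · p. -/

import Mathlib

open Finset

/-- fiber of `Sigma.fst` over `i` is `β i`. -/
def sigmaFstFiber {n : ℕ} (β : Fin n → Type*) (i : Fin n) :
    {x : Σ j, β j // x.1 = i} ≃ β i where
  toFun x := x.2 ▸ x.1.2
  invFun b := ⟨⟨i, b⟩, rfl⟩
  left_inv := by rintro ⟨⟨j, b⟩, rfl⟩; rfl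
  right_inv b := rfl

lemma count_realizing (r n : ℕ) (e : Fin n → ℕ) (h : ∑ j, e j = r) :
    (Finset.univ.filter
      (fun t : Fin r → Fin n => ∀ i, (Finset.univ.filter (fun s => t s = i)).card = e i)).card
      * ∏ i, (e i).factorial = r.factorial := by
  classical
  have hcard : Fintype.card (Fin r) = Fintype.card (Σ i : Fin n, Fin (e i)) := by
    simp [Fintype.card_sigma, h]
  let σ : Fin r ≃ Σ i : Fin n, Fin (e i) := Fintype.equivOfCardEq hcard
  let t₀ : Fin r → Fin n := fun s => (σ s).1
  have fibcard : ∀ (t : Fin r → Fin n) (i : Fin n),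
      (Finset.univ.filter (fun s => t s = i)).card = Fintype.card {s // t s = i} := by
    intro t i; rw [Fintype.card_subtype]
  have ht₀ : ∀ i, (Finset.univ.filter (fun s => t₀ s = i)).card = e i := by
    intro i
    rw [fibcard]
    have : {s // t₀ s = i} ≃ Fin (e i) :=
      (σ.subtypeEquiv (fun s => Iff.rfl)).trans (sigmaFstFiber (fun j => Fin (e j)) i)
    simp [Fintype.card_congr this]
  -- the set
  set S := Finset.univ.filter
      (fun t : Fin r → Fin n => ∀ i, (Finset.univ.filter (fun s => t s = i)).card = e i) with hS
  -- map from permutations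
  have hmaps : ∀ g : Equiv.Perm (Fin r), g ∈ (Finset.univ : Finset (Equiv.Perm (Fin r))) →
      t₀ ∘ g ∈ S := by
    intro g _
    simp only [hS, Finset.mem_filter, Finset.mem_univ, true_and]
    intro i
    rw [← ht₀ i]
    apply Finset.card_bij (fun s _ => g s)
    · intro s hs; simp_all
    · intro a _ b _ hab; exact g.injective hab
    · intro b hb; exact ⟨g.symm b, by simp_all, by simp⟩
  have key := Finset.card_eq_sum_card_fiberwise hmaps
  -- each fiber has card ∏ (e i)!
  have hfiber : ∀ t ∈ S, (Finset.univ.filter (fun g : Equiv.Perm (Fin r) => t₀ ∘ g = t)).card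
      = ∏ i, (e i).factorial := by
    intro t ht
    simp only [hS, Finset.mem_filter, Finset.mem_univ, true_and] at ht
    -- find g₀ with t₀ ∘ g₀ = t
    have fe : ∀ i, {s // t s = i} ≃ {s // t₀ s = i} := by
      intro i
      apply Fintype.equivOfCardEq
      rw [← fibcard, ← fibcard, ht i, ht₀ i]
    let g₀ : Equiv.Perm (Fin r) := Equiv.ofFiberEquiv fe
    have hg₀ : ∀ s, t₀ (g₀ s) = t s := fun s => Equiv.ofFiberEquiv_map fe s
    have : (Finset.univ.filter (fun g : Equiv.Perm (Fin r) => t₀ ∘ g = t)).card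
        = (Finset.univ.filter (fun g : Equiv.Perm (Fin r) => t₀ ∘ g = t₀)).card := by
      apply Finset.card_bij (fun g _ => g₀.symm.trans g)
      · intro g hg
        simp only [Finset.mem_filter, Finset.mem_univ, true_and] at hg ⊢
        funext s
        have h1 : t₀ (g (g₀.symm s)) = t (g₀.symm s) := congrFun hg (g₀.symm s)
        have h2 : t (g₀.symm s) = t₀ s := by
          have := hg₀ (g₀.symm s); simpa using this.symm
        simpa using h1.trans h2
      · intro a _ b _ hab
        ext y
        have := congrFun (congrArg (fun (q : Fin r ≃ Fin r) => (q : Fin r → Fin r)) hab) (g₀ y)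
        simp only [Equiv.trans_apply, Equiv.symm_apply_apply] at this
        exact congrArg Fin.val this
      · intro h hh
        simp only [Finset.mem_filter, Finset.mem_univ, true_and] at hh
        refine ⟨g₀.trans h, ?_, by ext s; simp⟩
        simp only [Finset.mem_filter, Finset.mem_univ, true_and]
        funext s
        have h1 : t₀ (h (g₀ s)) = t₀ (g₀ s) := congrFun hh (g₀ s)
        simpa [hg₀ s] using h1
    rw [this]
    have := DomMulAct.stabilizer_card t₀
    rw [← Fintype.card_subtype]
    rw [this]
    apply Finset.prod_congr rfl
    intro i _
    rw [← fibcard, ht₀]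
  rw [Finset.sum_congr rfl hfiber, Finset.sum_const, smul_eq_mul,
    Finset.card_univ, Fintype.card_perm, Fintype.card_fin] at key
  omega

/-- For an `r`-m-uniform hb-graph on `Fin n` with hb-edges `e 1, …, e p`
(each of m-cardinality `r ≥ 1`) and its k̄-adjacency hypermatrix
`A_H(t) = Σ_k (∏_i e_k(i)!)/(r−1)! · [t realizes e_k]`, the sum of all entries of
`A_H` equals `r · p`, i.e. `r` times the number of hb-edges. -/
theorem stmt7 (n p r : ℕ) (hr : 1 ≤ r) (e : Fin p → Fin n → ℕ)
    (hunif : ∀ k, ∑ j, e k j = r) :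
    ∑ t : Fin r → Fin n,
        (∑ k, if ∀ i, (Finset.univ.filter (fun s => t s = i)).card = e k i
              then ((∏ i, (e k i).factorial : ℕ) : ℝ) / (r - 1).factorial
              else 0)
      = (r : ℝ) * p := by
  classical
  rw [Finset.sum_comm]
  have hmain : ∀ k : Fin p,
      (∑ t : Fin r → Fin n,
        if ∀ i, (Finset.univ.filter (fun s => t s = i)).card = e k i
        then ((∏ i, (e k i).factorial : ℕ) : ℝ) / (r - 1).factorial
        else 0) = (r : ℝ) := by
    intro k
    rw [← Finset.sum_filter, Finset.sum_const, nsmul_eq_mul]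
    have hc := count_realizing r n (e k) (hunif k)
    have hrf : r * (r - 1).factorial = r.factorial := Nat.mul_factorial_pred (Nat.one_le_iff_ne_zero.mp hr)
    have hpos : (0 : ℝ) < ((r - 1).factorial : ℝ) := by
      exact_mod_cast Nat.factorial_pos _
    rw [mul_div_assoc', div_eq_iff (ne_of_gt hpos)]
    exact_mod_cast hc.trans hrf.symm
  rw [Finset.sum_congr rfl (fun k _ => hmain k), Finset.sum_const, Finset.card_univ,
    Fintype.card_fin, nsmul_eq_mul]
  ring
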